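/- Let (Ω, F, P) be a probability space with a filtration φ_0 ⊆ φ_1 ⊆ φ_2 ⊆ ⋯ of sub-σ-algebras of F. Let a be a positive integer, and let p, q be reals with q > p ≥ 0 and p + q ≤ 1. Let Y_1, Y_2, … be random variables taking values in {−1, 0, 1} with each Y_i measurable with respect to φ_i. Let E_0, E_1, … be events with each E_i ∈ φ_i, and let E = ⋂_{i≥0} E_i. Set R_0 = 0 and R_k = Σ_{i=1}^k Y_i for k ≥ 1. Assume that for each i ≥ 1: P(Y_i = 1 | φ_{i−1}) ≤ p almost everywhere on E_{i−1} ∩ {0 ≤ R_{i−1} ≤ a − 1}, and P(Y_i = −1 | φ_{i−1}) ≥ q almost everywhere on E_{i−1} ∩ {0 ≤ R_{i−1} ≤ a − 1}. Let H be the event that the walk reaches a before −1, i.e., that there exists k ≥ 1 with R_k = a and R_j ∉ {−1, a} for all 1 ≤ j < k. Then P(E ∩ H) ≤ (p/q)^a. -/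

import Mathlib

open MeasureTheory

set_option maxHeartbeats 2000000 in
theorem aux_drift_walk
    {Ω : Type*} {F : MeasurableSpace Ω} (P : Measure Ω) [IsProbabilityMeasure P]
    (a : ℕ) (ha : 1 ≤ a)
    (p q : ℝ) (hp0 : 0 < p) (hpq : p < q)
    (φ : ℕ → MeasurableSpace Ω) (hφ_mono : Monotone φ) (hφ_le : ∀ i, φ i ≤ F)
    (Y : ℕ → Ω → ℤ) (hY_range : ∀ i ω, Y i ω ∈ ({-1, 0, 1} : Set ℤ))
    (hY_meas : ∀ i, Measurable[φ i] (Y i))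
    (E : ℕ → Set Ω) (hE : ∀ i, MeasurableSet[φ i] (E i))
    (R : ℕ → Ω → ℤ)
    (hR : ∀ k ω, R k ω = ∑ i ∈ Finset.Icc 1 k, Y i ω)
    (hup : ∀ i : ℕ, 1 ≤ i →
      ∀ᵐ ω ∂P, (ω ∈ E (i - 1) ∧ 0 ≤ R (i - 1) ω ∧ R (i - 1) ω ≤ (a : ℤ) - 1) →
        (P[Set.indicator {ω' | Y i ω' = 1} (fun _ => (1 : ℝ)) | φ (i - 1)]) ω ≤ p)
    (hdown : ∀ i : ℕ, 1 ≤ i →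
      ∀ᵐ ω ∂P, (ω ∈ E (i - 1) ∧ 0 ≤ R (i - 1) ω ∧ R (i - 1) ω ≤ (a : ℤ) - 1) →
        q ≤ (P[Set.indicator {ω' | Y i ω' = -1} (fun _ => (1 : ℝ)) | φ (i - 1)]) ω)
    (H : Set Ω)
    (hH : H = {ω | ∃ k : ℕ, 1 ≤ k ∧ R k ω = (a : ℤ) ∧
      ∀ j : ℕ, 1 ≤ j → j < k → R j ω ≠ -1 ∧ R j ω ≠ (a : ℤ)}) :
    P ((⋂ i, E i) ∩ H) ≤ ENNReal.ofReal ((p / q) ^ a) := by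
  have hq0 : 0 < q := hp0.trans hpq
  set s : ℝ := q / p with hs_def
  have hs1 : 1 < s := (one_lt_div hp0).2 hpq
  have hs0 : 0 < s := lt_trans one_pos hs1
  have hsne : s ≠ 0 := ne_of_gt hs0
  -- basic facts about R and Y
  have hR0 : ∀ ω, R 0 ω = 0 := by
    intro ω; rw [hR]; simp
  have hRstep : ∀ k ω, R (k + 1) ω = R k ω + Y (k + 1) ω := by
    intro k ω; rw [hR, hR, Finset.sum_Icc_succ_top (by omega : 1 ≤ k + 1)]
  have hYbd : ∀ i ω, -1 ≤ Y i ω ∧ Y i ω ≤ 1 := by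
    intro i ω
    rcases hY_range i ω with h | h | h <;> simp_all <;> omega
  have hYF : ∀ i, Measurable (Y i) := fun i => (hY_meas i).mono (hφ_le i) le_rfl
  have hRmeas : ∀ k, Measurable[φ k] (R k) := by
    intro k
    have : R k = fun ω => ∑ i ∈ Finset.Icc 1 k, Y i ω := funext fun ω => hR k ω
    rw [this]
    exact Finset.measurable_sum _ fun i hi =>
      (hY_meas i).mono (hφ_mono (Finset.mem_Icc.1 hi).2) le_rfl
  have hRF : ∀ k, Measurable (R k) := fun k => (hRmeas k).mono (hφ_le k) le_rfl
  -- the weight functions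
  set G : ℕ → Ω → ℝ := fun k ω => s ^ (R k ω) with hG_def
  have hGpos : ∀ k ω, 0 < G k ω := fun k ω => zpow_pos hs0 _
  have hGmeas : ∀ k, Measurable[φ k] (G k) := by
    intro k
    exact (measurable_from_top (f := fun z : ℤ => s ^ z)).comp (hRmeas k)
  have hGF : ∀ k, Measurable (G k) := fun k => (hGmeas k).mono (hφ_le k) le_rfl
  -- the "good" events
  set B : ℕ → Set Ω := fun k =>
    ⋂ i ∈ Finset.range (k + 1), (E i ∩ {ω | 0 ≤ R i ω ∧ R i ω ≤ (a : ℤ) - 1}) with hB_def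
  have hBmem : ∀ k ω, ω ∈ B k ↔ ∀ i ≤ k, ω ∈ E i ∧ 0 ≤ R i ω ∧ R i ω ≤ (a : ℤ) - 1 := by
    intro k ω
    simp [hB_def, Nat.lt_succ_iff]
  have hBmeas : ∀ k, MeasurableSet[φ k] (B k) := by
    intro k
    refine Finset.measurableSet_biInter _ fun i hi => ?_
    have hik : i ≤ k := Nat.lt_succ_iff.1 (Finset.mem_range.1 hi)
    refine MeasurableSet.inter ((hφ_mono hik) _ (hE i)) ?_
    have h1 : MeasurableSet[φ i] {ω | 0 ≤ R i ω ∧ R i ω ≤ (a : ℤ) - 1} := by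
      have : {ω | 0 ≤ R i ω ∧ R i ω ≤ (a : ℤ) - 1}
          = R i ⁻¹' {z | 0 ≤ z ∧ z ≤ (a : ℤ) - 1} := rfl
      rw [this]
      exact (hRmeas i) MeasurableSpace.measurableSet_top
    exact (hφ_mono hik) _ h1
  have hBF : ∀ k, MeasurableSet (B k) := fun k => (hφ_le k) _ (hBmeas k)
  have hBsub : ∀ k, B (k + 1) ⊆ B k := by
    intro k ω hω
    rw [hBmem] at hω ⊢
    exact fun i hi => hω i (hi.trans (Nat.le_succ k))
  -- the success events
  set C : ℕ → Set Ω := fun k => B k ∩ {ω | R (k + 1) ω = (a : ℤ)} with hC_def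
  have hCF : ∀ k, MeasurableSet (C k) := by
    intro k
    exact (hBF k).inter ((hRF (k + 1)) (measurableSet_singleton _))
  -- bounds
  set c : ℝ := s ^ (a : ℤ) with hc_def
  have hc0 : 0 < c := zpow_pos hs0 _
  have hGbd : ∀ k ω, ω ∈ B k → G k ω ≤ c := by
    intro k ω hω
    have h := ((hBmem k ω).1 hω k le_rfl).2.2
    exact zpow_le_zpow_right₀ hs1.le (by omega)
  have hGbd' : ∀ k ω, ω ∈ B k → G (k + 1) ω ≤ c := by
    intro k ω hω
    have h := ((hBmem k ω).1 hω k le_rfl).2.2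
    have hy := hYbd (k + 1) ω
    have : R (k + 1) ω ≤ (a : ℤ) := by rw [hRstep]; omega
    exact zpow_le_zpow_right₀ hs1.le this
  -- integrability helper
  have hbdd_int : ∀ (f : Ω → ℝ), Measurable f → (∀ ω, |f ω| ≤ c) → Integrable f P := by
    intro f hf hb
    exact (integrable_const c).mono' hf.aestronglyMeasurable (ae_of_all _ hb)
  have h_ind_abs : ∀ (k : ℕ) (A : Set Ω) ω, |A.indicator (G k) ω| ≤ G k ω := by
    intro k A ω
    by_cases hω : ω ∈ A <;>
      simp [Set.indicator_of_mem, Set.indicator_of_notMem, hω, abs_of_pos (hGpos k ω),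
        (hGpos k ω).le]
  have int_BG : ∀ k, Integrable ((B k).indicator (G k)) P := by
    intro k
    refine hbdd_int _ ((hGF k).indicator (hBF k)) fun ω => ?_
    by_cases hω : ω ∈ B k
    · simp [Set.indicator_of_mem hω, abs_of_pos (hGpos k ω)]
      exact hGbd k ω hω
    · simp [Set.indicator_of_notMem hω, hc0.le]
  have int_BG' : ∀ k, Integrable ((B k).indicator (G (k + 1))) P := by
    intro k
    refine hbdd_int _ ((hGF (k + 1)).indicator (hBF k)) fun ω => ?_
    by_cases hω : ω ∈ B k
    · simp [Set.indicator_of_mem hω, abs_of_pos (hGpos (k + 1) ω)]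
      exact hGbd' k ω hω
    · simp [Set.indicator_of_notMem hω, hc0.le]
  -- the conditional expectation step
  have step2 : ∀ k, ∫ ω, (B k).indicator (G (k + 1)) ω ∂P
      ≤ ∫ ω, (B k).indicator (G k) ω ∂P := by
    intro k
    have hm : φ k ≤ F := hφ_le k
    haveI : SigmaFinite (P.trim hm) := inferInstance
    have hk1 : 1 ≤ k + 1 := by omega
    have hYcases : ∀ ω, Y (k + 1) ω = -1 ∨ Y (k + 1) ω = 0 ∨ Y (k + 1) ω = 1 := by
      intro ω
      have := hY_range (k + 1) ω
      simpa using this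
    set A1 : Set Ω := {ω' | Y (k + 1) ω' = 1} with hA1_def
    set A2 : Set Ω := {ω' | Y (k + 1) ω' = -1} with hA2_def
    have hA1F : MeasurableSet A1 := hYF (k + 1) (measurableSet_singleton 1)
    have hA2F : MeasurableSet A2 := hYF (k + 1) (measurableSet_singleton (-1))
    set i1 : Ω → ℝ := A1.indicator (fun _ => (1 : ℝ)) with hi1_def
    set i2 : Ω → ℝ := A2.indicator (fun _ => (1 : ℝ)) with hi2_def
    set h : Ω → ℝ := (B k).indicator (G k) with hh_def
    have hh_sm : StronglyMeasurable[φ k] h :=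
      ((hGmeas k).stronglyMeasurable).indicator (hBmeas k)
    have hhF : Measurable h := (hGF k).indicator (hBF k)
    have hhnn : ∀ ω, 0 ≤ h ω := fun ω =>
      Set.indicator_nonneg (fun ω' _ => (hGpos k ω').le) ω
    have hhbd : ∀ ω, |h ω| ≤ c := by
      intro ω
      by_cases hω : ω ∈ B k
      · rw [hh_def, Set.indicator_of_mem hω, abs_of_pos (hGpos k ω)]
        exact hGbd k ω hω
      · rw [hh_def, Set.indicator_of_notMem hω]
        simp [hc0.le]
    have int_h : Integrable h P := int_BG k
    have int_i1 : Integrable i1 P := (integrable_const (1 : ℝ)).indicator hA1F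
    have int_i2 : Integrable i2 P := (integrable_const (1 : ℝ)).indicator hA2F
    have hi1bd : ∀ ω, |i1 ω| ≤ 1 := by
      intro ω
      by_cases hω : ω ∈ A1 <;>
        simp [hi1_def, Set.indicator_of_mem, Set.indicator_of_notMem, hω]
    have hi2bd : ∀ ω, |i2 ω| ≤ 1 := by
      intro ω
      by_cases hω : ω ∈ A2 <;>
        simp [hi2_def, Set.indicator_of_mem, Set.indicator_of_notMem, hω]
    have int_hi1 : Integrable (h * i1) P := by
      refine hbdd_int _ (hhF.mul (measurable_const.indicator hA1F)) fun ω => ?_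
      rw [Pi.mul_apply, abs_mul]
      calc |h ω| * |i1 ω| ≤ c * 1 :=
            mul_le_mul (hhbd ω) (hi1bd ω) (abs_nonneg _) hc0.le
        _ = c := mul_one c
    have int_hi2 : Integrable (h * i2) P := by
      refine hbdd_int _ (hhF.mul (measurable_const.indicator hA2F)) fun ω => ?_
      rw [Pi.mul_apply, abs_mul]
      calc |h ω| * |i2 ω| ≤ c * 1 :=
            mul_le_mul (hhbd ω) (hi2bd ω) (abs_nonneg _) hc0.le
        _ = c := mul_one c
    set c1 : Ω → ℝ := P[i1 | φ k] with hc1_def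
    set c2 : Ω → ℝ := P[i2 | φ k] with hc2_def
    have int_hc1 : Integrable (h * c1) P :=
      Integrable.bdd_mul integrable_condExp hhF.aestronglyMeasurable
        (ae_of_all _ fun ω => by rw [Real.norm_eq_abs]; exact hhbd ω)
    have int_hc2 : Integrable (h * c2) P :=
      Integrable.bdd_mul integrable_condExp hhF.aestronglyMeasurable
        (ae_of_all _ fun ω => by rw [Real.norm_eq_abs]; exact hhbd ω)
    have eq_cond1 : ∫ ω, (h * i1) ω ∂P = ∫ ω, (h * c1) ω ∂P := by
      calc ∫ ω, (h * i1) ω ∂P = ∫ ω, (P[h * i1 | φ k]) ω ∂P := (integral_condExp hm).symm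
        _ = ∫ ω, (h * c1) ω ∂P :=
            integral_congr_ae (condExp_mul_of_stronglyMeasurable_left hh_sm int_hi1 int_i1)
    have eq_cond2 : ∫ ω, (h * i2) ω ∂P = ∫ ω, (h * c2) ω ∂P := by
      calc ∫ ω, (h * i2) ω ∂P = ∫ ω, (P[h * i2 | φ k]) ω ∂P := (integral_condExp hm).symm
        _ = ∫ ω, (h * c2) ω ∂P :=
            integral_congr_ae (condExp_mul_of_stronglyMeasurable_left hh_sm int_hi2 int_i2)
    have eq1 : (B k).indicator (G (k + 1))
        = fun ω => h ω + (s - 1) * (h * i1) ω + (s⁻¹ - 1) * (h * i2) ω := by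
      funext ω
      by_cases hω : ω ∈ B k
      · have hstep := hRstep k ω
        have hval : h ω = s ^ (R k ω) := by rw [hh_def, Set.indicator_of_mem hω]
        rw [Set.indicator_of_mem hω]
        rcases hYcases ω with hy | hy | hy
        · have hi1v : i1 ω = 0 := by
            rw [hi1_def, Set.indicator_of_notMem]
            simp only [hA1_def, Set.mem_setOf_eq, hy]
            omega
          have hi2v : i2 ω = 1 := by
            rw [hi2_def, Set.indicator_of_mem]
            simp only [hA2_def, Set.mem_setOf_eq, hy]
          have : G (k + 1) ω = s ^ (R k ω) * s⁻¹ := by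
            simp only [hG_def, hstep, hy]
            rw [zpow_add₀ hsne, zpow_neg_one]
          rw [this]
          simp only [Pi.mul_apply, hi1v, hi2v, hval]
          ring
        · have hi1v : i1 ω = 0 := by
            rw [hi1_def, Set.indicator_of_notMem]
            simp only [hA1_def, Set.mem_setOf_eq, hy]
            omega
          have hi2v : i2 ω = 0 := by
            rw [hi2_def, Set.indicator_of_notMem]
            simp only [hA2_def, Set.mem_setOf_eq, hy]
            omega
          have : G (k + 1) ω = s ^ (R k ω) := by
            simp only [hG_def, hstep, hy, add_zero]
          rw [this]
          simp only [Pi.mul_apply, hi1v, hi2v, hval]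
          ring
        · have hi1v : i1 ω = 1 := by
            rw [hi1_def, Set.indicator_of_mem]
            simp only [hA1_def, Set.mem_setOf_eq, hy]
          have hi2v : i2 ω = 0 := by
            rw [hi2_def, Set.indicator_of_notMem]
            simp only [hA2_def, Set.mem_setOf_eq, hy]
            omega
          have : G (k + 1) ω = s ^ (R k ω) * s := by
            simp only [hG_def, hstep, hy]
            rw [zpow_add₀ hsne, zpow_one]
          rw [this]
          simp only [Pi.mul_apply, hi1v, hi2v, hval]
          ring
      · have hval : h ω = 0 := by rw [hh_def, Set.indicator_of_notMem hω]
        rw [Set.indicator_of_notMem hω]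
        simp only [Pi.mul_apply, hval]
        ring
    -- the conditional bounds
    have hupk : ∀ᵐ ω ∂P, (ω ∈ E k ∧ 0 ≤ R k ω ∧ R k ω ≤ (a : ℤ) - 1) → c1 ω ≤ p := by
      have := hup (k + 1) hk1
      simpa using this
    have hdownk : ∀ᵐ ω ∂P, (ω ∈ E k ∧ 0 ≤ R k ω ∧ R k ω ≤ (a : ℤ) - 1) → q ≤ c2 ω := by
      have := hdown (k + 1) hk1
      simpa using this
    have hb1 : ∫ ω, (h * c1) ω ∂P ≤ p * ∫ ω, h ω ∂P := by
      rw [← integral_const_mul]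
      refine integral_mono_ae int_hc1 (int_h.const_mul p) ?_
      filter_upwards [hupk] with ω hω
      by_cases hB : ω ∈ B k
      · have hcond := (hBmem k ω).1 hB k le_rfl
        have hc1p : c1 ω ≤ p := hω ⟨hcond.1, hcond.2.1, hcond.2.2⟩
        calc (h * c1) ω = h ω * c1 ω := rfl
          _ ≤ h ω * p := mul_le_mul_of_nonneg_left hc1p (hhnn ω)
          _ = p * h ω := mul_comm _ _
      · have : h ω = 0 := by rw [hh_def, Set.indicator_of_notMem hB]
        simp [Pi.mul_apply, this]
    have hb2 : q * ∫ ω, h ω ∂P ≤ ∫ ω, (h * c2) ω ∂P := by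
      rw [← integral_const_mul]
      refine integral_mono_ae (int_h.const_mul q) int_hc2 ?_
      filter_upwards [hdownk] with ω hω
      by_cases hB : ω ∈ B k
      · have hcond := (hBmem k ω).1 hB k le_rfl
        have hc2q : q ≤ c2 ω := hω ⟨hcond.1, hcond.2.1, hcond.2.2⟩
        calc q * h ω = h ω * q := mul_comm _ _
          _ ≤ h ω * c2 ω := mul_le_mul_of_nonneg_left hc2q (hhnn ω)
          _ = (h * c2) ω := rfl
      · have : h ω = 0 := by rw [hh_def, Set.indicator_of_notMem hB]
        simp [Pi.mul_apply, this]
    -- put it together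
    have expand : ∫ ω, (B k).indicator (G (k + 1)) ω ∂P
        = ∫ ω, h ω ∂P + (s - 1) * ∫ ω, (h * i1) ω ∂P + (s⁻¹ - 1) * ∫ ω, (h * i2) ω ∂P := by
      have ja1 : Integrable (fun ω => h ω + (s - 1) * (h * i1) ω) P :=
        int_h.add (int_hi1.const_mul _)
      have ja2 : Integrable (fun ω => (s⁻¹ - 1) * (h * i2) ω) P := int_hi2.const_mul _
      have A1 : ∫ ω, (h ω + (s - 1) * (h * i1) ω + (s⁻¹ - 1) * (h * i2) ω) ∂P
          = (∫ ω, (h ω + (s - 1) * (h * i1) ω) ∂P) + ∫ ω, (s⁻¹ - 1) * (h * i2) ω ∂P :=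
        integral_add ja1 ja2
      have A2 : ∫ ω, (h ω + (s - 1) * (h * i1) ω) ∂P
          = ∫ ω, h ω ∂P + ∫ ω, (s - 1) * (h * i1) ω ∂P :=
        integral_add int_h (int_hi1.const_mul _)
      have A3 : ∫ ω, (s - 1) * (h * i1) ω ∂P = (s - 1) * ∫ ω, (h * i1) ω ∂P :=
        integral_const_mul _ _
      have A4 : ∫ ω, (s⁻¹ - 1) * (h * i2) ω ∂P = (s⁻¹ - 1) * ∫ ω, (h * i2) ω ∂P :=
        integral_const_mul _ _
      simp only [eq1]
      rw [A1, A2, A3, A4]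
    have hcoef : (s - 1) * p + (s⁻¹ - 1) * q = 0 := by
      rw [hs_def, inv_div]
      field_simp
      ring
    have hs1' : 0 ≤ s - 1 := by linarith
    have hsinv : s⁻¹ - 1 ≤ 0 := by
      have : s⁻¹ < 1 := inv_lt_one_of_one_lt₀ hs1
      linarith
    have final : ∫ ω, h ω ∂P + (s - 1) * ∫ ω, (h * c1) ω ∂P
        + (s⁻¹ - 1) * ∫ ω, (h * c2) ω ∂P ≤ ∫ ω, h ω ∂P := by
      have t1 : (s - 1) * ∫ ω, (h * c1) ω ∂P ≤ (s - 1) * (p * ∫ ω, h ω ∂P) :=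
        mul_le_mul_of_nonneg_left hb1 hs1'
      have t2 : (s⁻¹ - 1) * ∫ ω, (h * c2) ω ∂P ≤ (s⁻¹ - 1) * (q * ∫ ω, h ω ∂P) :=
        mul_le_mul_of_nonpos_left hb2 hsinv
      have t3 : (s - 1) * (p * ∫ ω, h ω ∂P) + (s⁻¹ - 1) * (q * ∫ ω, h ω ∂P)
          = ((s - 1) * p + (s⁻¹ - 1) * q) * ∫ ω, h ω ∂P := by ring
      have t4 : ((s - 1) * p + (s⁻¹ - 1) * q) * ∫ ω, h ω ∂P = 0 := by
        rw [hcoef]; ring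
      linarith [t1, t2, t3, t4]
    calc ∫ ω, (B k).indicator (G (k + 1)) ω ∂P
        = ∫ ω, h ω ∂P + (s - 1) * ∫ ω, (h * i1) ω ∂P + (s⁻¹ - 1) * ∫ ω, (h * i2) ω ∂P :=
          expand
      _ = ∫ ω, h ω ∂P + (s - 1) * ∫ ω, (h * c1) ω ∂P + (s⁻¹ - 1) * ∫ ω, (h * c2) ω ∂P := by
          rw [eq_cond1, eq_cond2]
      _ ≤ ∫ ω, h ω ∂P := final
  -- the supermartingale step with payoff
  set W : ℕ → ℝ := fun k => ∫ ω, (B k).indicator (G k) ω ∂P with hW_def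
  have int_ind_c : ∀ k, Integrable ((C k).indicator (fun _ => c)) P :=
    fun k => (integrable_const c).indicator (hCF k)
  have step : ∀ k, W (k + 1) + c * (P (C k)).toReal ≤ W k := by
    intro k
    have hpt : ∀ ω, (B (k + 1)).indicator (G (k + 1)) ω + (C k).indicator (fun _ => c) ω
        ≤ (B k).indicator (G (k + 1)) ω := by
      intro ω
      by_cases h1 : ω ∈ B (k + 1)
      · have h2 : ω ∉ C k := by
          intro h2
          have := ((hBmem (k + 1) ω).1 h1 (k + 1) le_rfl).2.2
          have := h2.2
          simp only [Set.mem_setOf_eq] at this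
          omega
        rw [Set.indicator_of_mem h1, Set.indicator_of_notMem h2,
          Set.indicator_of_mem (hBsub k h1)]
        simp
      · rw [Set.indicator_of_notMem h1, zero_add]
        by_cases h2 : ω ∈ C k
        · rw [Set.indicator_of_mem h2, Set.indicator_of_mem h2.1]
          have : R (k + 1) ω = (a : ℤ) := h2.2
          simp only [hG_def, this, hc_def]
          exact le_rfl
        · rw [Set.indicator_of_notMem h2]
          by_cases h3 : ω ∈ B k
          · rw [Set.indicator_of_mem h3]; exact (hGpos (k + 1) ω).le
          · rw [Set.indicator_of_notMem h3]
      -- end pointwise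
    have hint : ∫ ω, ((B (k + 1)).indicator (G (k + 1)) ω + (C k).indicator (fun _ => c) ω) ∂P
        = W (k + 1) + c * (P (C k)).toReal := by
      rw [integral_add (int_BG (k + 1)) (int_ind_c k), integral_indicator_const _ (hCF k)]
      simp [hW_def, mul_comm, measureReal_def]
    calc W (k + 1) + c * (P (C k)).toReal
        = ∫ ω, ((B (k + 1)).indicator (G (k + 1)) ω + (C k).indicator (fun _ => c) ω) ∂P :=
          hint.symm
      _ ≤ ∫ ω, (B k).indicator (G (k + 1)) ω ∂P :=
          integral_mono ((int_BG (k + 1)).add (int_ind_c k)) (int_BG' k) hpt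
      _ ≤ W k := step2 k
  -- telescoping
  have hWnn : ∀ N, 0 ≤ W N :=
    fun N => integral_nonneg fun ω => Set.indicator_nonneg (fun ω' _ => (hGpos N ω').le) ω
  have hW0 : W 0 ≤ 1 := by
    have : (B 0).indicator (G 0) = (B 0).indicator (fun _ => (1 : ℝ)) := by
      funext ω
      by_cases hω : ω ∈ B 0 <;>
        simp [Set.indicator_of_mem, Set.indicator_of_notMem, hω, hG_def, hR0 ω]
    have h2 : W 0 = (P (B 0)).toReal := by
      show (∫ ω, (B 0).indicator (G 0) ω ∂P) = (P (B 0)).toReal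
      rw [this, integral_indicator_const (1 : ℝ) (hBF 0)]
      simp [measureReal_def]
    rw [h2]
    calc (P (B 0)).toReal ≤ (P Set.univ).toReal :=
          ENNReal.toReal_mono (measure_ne_top _ _) (measure_mono (Set.subset_univ _))
      _ = 1 := by simp
  have tele : ∀ N, W N + ∑ k ∈ Finset.range N, c * (P (C k)).toReal ≤ W 0 := by
    intro N
    induction N with
    | zero => simp
    | succ N ih =>
      rw [Finset.sum_range_succ]
      have := step N
      linarith
  have hpartial : ∀ N, ∑ k ∈ Finset.range N, (P (C k)).toReal ≤ (p / q) ^ a := by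
    intro N
    have h1 : c * ∑ k ∈ Finset.range N, (P (C k)).toReal ≤ 1 := by
      rw [Finset.mul_sum]
      have := tele N
      have := hWnn N
      linarith [hW0]
    have h2 : ∑ k ∈ Finset.range N, (P (C k)).toReal ≤ 1 / c :=
      (le_div_iff₀ hc0).2 (by linarith [h1])
    have h3 : 1 / c = (p / q) ^ a := by
      rw [one_div, hc_def, ← inv_zpow, hs_def, inv_div, zpow_natCast]
    linarith [h2, h3.le, h3.ge]
  -- inclusion of the target event
  have hsub : (⋂ i, E i) ∩ H ⊆ ⋃ k, C k := by
    rintro ω ⟨hEω, hHω⟩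
    rw [hH] at hHω
    obtain ⟨k, hk1, hka, hbefore⟩ := hHω
    have hin : ∀ j, j < k → 0 ≤ R j ω ∧ R j ω ≤ (a : ℤ) - 1 := by
      intro j
      induction j with
      | zero =>
        intro _
        have : (1 : ℤ) ≤ (a : ℤ) := by exact_mod_cast ha
        rw [hR0]; omega
      | succ j ih =>
        intro hlt
        have hj := ih (by omega)
        have hy := hYbd (j + 1) ω
        have hne := hbefore (j + 1) (by omega) hlt
        have hstep := hRstep j ω
        constructor <;> omega
    refine Set.mem_iUnion.2 ⟨k - 1, ?_⟩
    have hk : k - 1 + 1 = k := by omega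
    constructor
    · rw [hBmem]
      intro i hi
      exact ⟨Set.mem_iInter.1 hEω i, hin i (by omega)⟩
    · show R (k - 1 + 1) ω = (a : ℤ)
      rw [hk]; exact hka
  -- disjointness
  have hdisj : Pairwise (Function.onFun Disjoint C) := by
    have key : ∀ k l, k < l → Disjoint (C k) (C l) := by
      intro k l hkl
      rw [Set.disjoint_left]
      rintro ω ⟨hBk, hRk⟩ ⟨hBl, _⟩
      have h1 := ((hBmem l ω).1 hBl (k + 1) (by omega)).2.2
      simp only [Set.mem_setOf_eq] at hRk
      omega
    intro k l hkl
    rcases lt_or_gt_of_ne hkl with h | h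
    · exact key k l h
    · exact (key l k h).symm
  -- conclusion
  calc P ((⋂ i, E i) ∩ H) ≤ P (⋃ k, C k) := measure_mono hsub
    _ = ∑' k, P (C k) := measure_iUnion hdisj hCF
    _ ≤ ENNReal.ofReal ((p / q) ^ a) := by
      refine ENNReal.tsum_le_of_sum_range_le fun N => ?_
      have : ∑ k ∈ Finset.range N, P (C k)
          = ENNReal.ofReal (∑ k ∈ Finset.range N, (P (C k)).toReal) := by
        rw [ENNReal.ofReal_sum_of_nonneg fun k _ => ENNReal.toReal_nonneg]
        exact Finset.sum_congr rfl fun k _ => (ENNReal.ofReal_toReal (measure_ne_top _ _)).symm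
      rw [this]
      exact ENNReal.ofReal_le_ofReal (hpartial N)

theorem drift_walk_crossing_bound
    {Ω : Type*} {F : MeasurableSpace Ω} (P : Measure Ω) [IsProbabilityMeasure P]
    (a : ℕ) (ha : 1 ≤ a)
    (p q : ℝ) (hp0 : 0 ≤ p) (hpq : p < q) (hpq1 : p + q ≤ 1)
    (φ : ℕ → MeasurableSpace Ω) (hφ_mono : Monotone φ) (hφ_le : ∀ i, φ i ≤ F)
    (Y : ℕ → Ω → ℤ) (hY_range : ∀ i ω, Y i ω ∈ ({-1, 0, 1} : Set ℤ))
    (hY_meas : ∀ i, Measurable[φ i] (Y i))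
    (E : ℕ → Set Ω) (hE : ∀ i, MeasurableSet[φ i] (E i))
    (R : ℕ → Ω → ℤ)
    (hR : ∀ k ω, R k ω = ∑ i ∈ Finset.Icc 1 k, Y i ω)
    (hup : ∀ i : ℕ, 1 ≤ i →
      ∀ᵐ ω ∂P, (ω ∈ E (i - 1) ∧ 0 ≤ R (i - 1) ω ∧ R (i - 1) ω ≤ (a : ℤ) - 1) →
        (P[Set.indicator {ω' | Y i ω' = 1} (fun _ => (1 : ℝ)) | φ (i - 1)]) ω ≤ p)
    (hdown : ∀ i : ℕ, 1 ≤ i →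
      ∀ᵐ ω ∂P, (ω ∈ E (i - 1) ∧ 0 ≤ R (i - 1) ω ∧ R (i - 1) ω ≤ (a : ℤ) - 1) →
        q ≤ (P[Set.indicator {ω' | Y i ω' = -1} (fun _ => (1 : ℝ)) | φ (i - 1)]) ω)
    (H : Set Ω)
    (hH : H = {ω | ∃ k : ℕ, 1 ≤ k ∧ R k ω = (a : ℤ) ∧
      ∀ j : ℕ, 1 ≤ j → j < k → R j ω ≠ -1 ∧ R j ω ≠ (a : ℤ)}) :
    P ((⋂ i, E i) ∩ H) ≤ ENNReal.ofReal ((p / q) ^ a) := by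
  have hq0 : 0 < q := lt_of_le_of_lt hp0 hpq
  have key : ∀ p' : ℝ, p < p' → p' < q →
      P ((⋂ i, E i) ∩ H) ≤ ENNReal.ofReal ((p' / q) ^ a) := by
    intro p' h1 h2
    refine aux_drift_walk P a ha p' q (lt_of_le_of_lt hp0 h1) h2 φ hφ_mono hφ_le Y hY_range
      hY_meas E hE R hR (fun i hi => (hup i hi).mono fun ω hw hmem => (hw hmem).trans h1.le)
      hdown H hH
  have hfin : P ((⋂ i, E i) ∩ H) ≠ ⊤ := measure_ne_top _ _
  have hr : ∀ p', p < p' → p' < q → (P ((⋂ i, E i) ∩ H)).toReal ≤ (p' / q) ^ a := by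
    intro p' h1 h2
    refine ENNReal.toReal_le_of_le_ofReal ?_ (key p' h1 h2)
    have : 0 ≤ p' / q := div_nonneg (hp0.trans h1.le) hq0.le
    positivity
  have hlim : (P ((⋂ i, E i) ∩ H)).toReal ≤ (p / q) ^ a := by
    have htend : Filter.Tendsto (fun x : ℝ => (x / q) ^ a) (nhdsWithin p (Set.Ioi p))
        (nhds ((p / q) ^ a)) :=
      (((continuous_pow a).comp (continuous_id.div_const q)).tendsto p).mono_left
        nhdsWithin_le_nhds
    have hev : ∀ᶠ x in nhdsWithin p (Set.Ioi p),
        (P ((⋂ i, E i) ∩ H)).toReal ≤ (x / q) ^ a := by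
      filter_upwards [Ioo_mem_nhdsGT_of_mem (Set.mem_Ico.2 ⟨le_refl p, hpq⟩)] with x hx
      exact hr x hx.1 hx.2
    exact ge_of_tendsto htend hev
  calc P ((⋂ i, E i) ∩ H) = ENNReal.ofReal (P ((⋂ i, E i) ∩ H)).toReal :=
        (ENNReal.ofReal_toReal hfin).symm
    _ ≤ ENNReal.ofReal ((p / q) ^ a) := ENNReal.ofReal_le_ofReal hlim
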